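/- Let s, x0, x1, x be nonzero elements of a field with q = s^2, q ≠ 1, and all denominators below nonzero. Define ω(y) = y(1 + s y)/(s(1 - y^2)(1 - s y)), b(t, y) = (s y + t^2)(s^3 y + t^2)/(q y), c(t, y) = (s y + t^2)(s + y t^2)/(s y), and β0 = s^{-1}·( (1-q)(1 - q/x0^2)(1 - q/x1^2)/(1 - q^2/(x0^2 x1^2)) - 1 ) - s. Then: ω(x)·( b(x0,x) b(x1,x) - c(x0,x) c(x1,x) ) + ω(1/x)·( b(x0,1/x) b(x1,1/x) - c(x0,x) c(x1,x) ) = s^{-5} (x0^2 x1^2 - q^2)^2 · ( x + 1/x - β0 ). -/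

import Mathlib

/-- weight function of the genus-two skein algebra difference operators -/
def skeinOmega {K : Type*} [Field K] (s y : K) : K :=
  y * (1 + s * y) / (s * (1 - y ^ 2) * (1 - s * y))

set_option maxHeartbeats 8000000 in
theorem stmt_12 {K : Type*} [Field K] (s q x0 x1 x : K) (hs : s ≠ 0) (hsq : s ^ 2 = q)
    (hq1 : q ≠ 1) (hx0 : x0 ≠ 0) (hx1 : x1 ≠ 0) (hx : x ≠ 0)
    (h1 : x ^ 2 ≠ 1) (h2 : x ≠ s) (h3 : s * x ≠ 1)
    (h4 : x0 ^ 2 * x1 ^ 2 ≠ q ^ 2)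
    (b c : K → K → K) (β0 : K)
    (hb : ∀ t y, b t y = (s * y + t ^ 2) * (s ^ 3 * y + t ^ 2) / (q * y))
    (hc : ∀ t y, c t y = (s * y + t ^ 2) * (s + y * t ^ 2) / (s * y))
    (hβ0 : β0 = s⁻¹ * ((1 - q) * (1 - q / x0 ^ 2) * (1 - q / x1 ^ 2)
        / (1 - q ^ 2 / (x0 ^ 2 * x1 ^ 2)) - 1) - s) :
    skeinOmega s x * (b x0 x * b x1 x - c x0 x * c x1 x)
      + skeinOmega s (1 / x) * (b x0 (1 / x) * b x1 (1 / x) - c x0 x * c x1 x)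
    = (s ^ 5)⁻¹ * (x0 ^ 2 * x1 ^ 2 - q ^ 2) ^ 2 * (x + 1 / x - β0) := by
  subst hsq
  have hx2 : (1 : K) - x ^ 2 ≠ 0 := fun h => h1 (by linear_combination -h)
  have hsx : (1 : K) - s * x ≠ 0 := fun h => h3 (by linear_combination -h)
  have hxs : x - s ≠ 0 := sub_ne_zero.mpr h2
  have hx21 : x ^ 2 - 1 ≠ 0 := fun h => h1 (by linear_combination h)
  have hd : x0 ^ 2 * x1 ^ 2 - (s ^ 2) ^ 2 ≠ 0 := sub_ne_zero.mpr h4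
  have hDne : x0 ^ 2 * x1 ^ 2 - s ^ 4 ≠ 0 := fun h => hd (by linear_combination h)
  have hx01 : x0 ^ 2 * x1 ^ 2 ≠ 0 := mul_ne_zero (pow_ne_zero 2 hx0) (pow_ne_zero 2 hx1)
  have hd' : (1 : K) - (s ^ 2) ^ 2 / (x0 ^ 2 * x1 ^ 2) ≠ 0 := by
    intro h
    apply hd
    field_simp at h
    linear_combination h
  have hs2x : s ^ 2 * x ≠ 0 := mul_ne_zero (pow_ne_zero 2 hs) hx
  have hsxne : s * x ≠ 0 := mul_ne_zero hs hx
  have hs4x2 : s ^ 4 * x ^ 2 ≠ 0 := mul_ne_zero (pow_ne_zero 4 hs) (pow_ne_zero 2 hx)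
  -- clean form of ω(1/x)
  have hA : s * (1 - (1 / x) ^ 2) * (1 - s * (1 / x)) ≠ 0 := by
    have e : s * (1 - (1 / x) ^ 2) * (1 - s * (1 / x)) = s * (x ^ 2 - 1) * (x - s) / x ^ 3 := by
      field_simp
    rw [e]
    exact div_ne_zero (mul_ne_zero (mul_ne_zero hs hx21) hxs) (pow_ne_zero 3 hx)
  have hom1 : skeinOmega s (1 / x) = x * (x + s) / (s * (x ^ 2 - 1) * (x - s)) := by
    rw [skeinOmega, div_eq_div_iff hA (mul_ne_zero (mul_ne_zero hs hx21) hxs)]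
    field_simp
  -- b at 1/x
  have hbinv : ∀ t : K, b t (1 / x) = (s + t ^ 2 * x) * (s ^ 3 + t ^ 2 * x) / (s ^ 2 * x) := by
    intro t
    rw [hb, div_eq_div_iff (by
        have : s ^ 2 * (1 / x) = s ^ 2 / x := by ring
        rw [this]; exact div_ne_zero (pow_ne_zero 2 hs) hx) hs2x]
    field_simp
  -- combine b·b - c·c into single fractions
  have hB1 : b x0 x * b x1 x - c x0 x * c x1 x
      = ((s * x + x0 ^ 2) * (s ^ 3 * x + x0 ^ 2) * ((s * x + x1 ^ 2) * (s ^ 3 * x + x1 ^ 2))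
          - s ^ 2 * ((s * x + x0 ^ 2) * (s + x * x0 ^ 2) * ((s * x + x1 ^ 2) * (s + x * x1 ^ 2))))
        / (s ^ 4 * x ^ 2) := by
    rw [hb, hb, hc, hc, div_mul_div_comm, div_mul_div_comm,
      div_sub_div _ _ (mul_ne_zero hs2x hs2x) (mul_ne_zero hsxne hsxne),
      div_eq_div_iff (mul_ne_zero (mul_ne_zero hs2x hs2x) (mul_ne_zero hsxne hsxne)) hs4x2]
    ring
  have hB2 : b x0 (1 / x) * b x1 (1 / x) - c x0 x * c x1 x
      = ((s + x0 ^ 2 * x) * (s ^ 3 + x0 ^ 2 * x) * ((s + x1 ^ 2 * x) * (s ^ 3 + x1 ^ 2 * x))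
          - s ^ 2 * ((s * x + x0 ^ 2) * (s + x * x0 ^ 2) * ((s * x + x1 ^ 2) * (s + x * x1 ^ 2))))
        / (s ^ 4 * x ^ 2) := by
    rw [hbinv, hbinv, hc, hc, div_mul_div_comm, div_mul_div_comm,
      div_sub_div _ _ (mul_ne_zero hs2x hs2x) (mul_ne_zero hsxne hsxne),
      div_eq_div_iff (mul_ne_zero (mul_ne_zero hs2x hs2x) (mul_ne_zero hsxne hsxne)) hs4x2]
    ring
  -- clean form of x + 1/x - β0
  have hR : x + 1 / x - β0
      = ((x ^ 2 + 1) * s * (x0 ^ 2 * x1 ^ 2 - s ^ 4)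
          - x * ((1 - s ^ 2) * (x0 ^ 2 - s ^ 2) * (x1 ^ 2 - s ^ 2) - (x0 ^ 2 * x1 ^ 2 - s ^ 4))
          + s ^ 2 * x * (x0 ^ 2 * x1 ^ 2 - s ^ 4))
        / (s * x * (x0 ^ 2 * x1 ^ 2 - s ^ 4)) := by
    have hkey : (1 - s ^ 2) * (1 - s ^ 2 / x0 ^ 2) * (1 - s ^ 2 / x1 ^ 2)
        / (1 - (s ^ 2) ^ 2 / (x0 ^ 2 * x1 ^ 2))
        = (1 - s ^ 2) * (x0 ^ 2 - s ^ 2) * (x1 ^ 2 - s ^ 2) / (x0 ^ 2 * x1 ^ 2 - s ^ 4) := by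
      rw [div_eq_div_iff hd' hDne]
      field_simp
    rw [hβ0, hkey, eq_div_iff (mul_ne_zero (mul_ne_zero hs hx) hDne)]
    field_simp
    ring
  rw [hom1, hB1, hB2, hR, skeinOmega, div_mul_div_comm, div_mul_div_comm,
    div_add_div _ _ (mul_ne_zero (mul_ne_zero (mul_ne_zero hs hx2) hsx) hs4x2)
      (mul_ne_zero (mul_ne_zero (mul_ne_zero hs hx21) hxs) hs4x2),
    inv_mul_eq_div, div_mul_eq_mul_div, mul_div_assoc', div_div,
    div_eq_div_iff
      (mul_ne_zero (mul_ne_zero (mul_ne_zero (mul_ne_zero hs hx2) hsx) hs4x2)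
        (mul_ne_zero (mul_ne_zero (mul_ne_zero hs hx21) hxs) hs4x2))
      (mul_ne_zero (mul_ne_zero (mul_ne_zero hs hx) hDne) (pow_ne_zero 5 hs))]
  ring
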